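/- For every real t > 1, (−(3/2)·t^(7/3) + 2t³ − t/2 + 3/t)·√(t² − 1) − 3·arccosh(t) > 0. -/

import Mathlib

open Real

-- generic monotonicity helper
lemma mono_help {f f' : ℝ → ℝ}
    (hd : ∀ x : ℝ, 1 ≤ x → HasDerivAt f (f' x) x)
    (h0 : ∀ x : ℝ, 1 ≤ x → 0 ≤ f' x) (h1 : f 1 = 0) :
    ∀ x : ℝ, 1 ≤ x → 0 ≤ f x := by
  intro x hx
  rw [← h1]
  have hmono : MonotoneOn f (Set.Ici (1:ℝ)) := by
    apply monotoneOn_of_deriv_nonneg (convex_Ici 1)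
    · intro y hy
      exact (hd y hy).continuousAt.continuousWithinAt
    · intro y hy
      rw [interior_Ici] at hy
      exact (hd y hy.le).differentiableAt.differentiableWithinAt
    · intro y hy
      rw [interior_Ici] at hy
      rw [(hd y hy.le).deriv]
      exact h0 y hy.le
  exact hmono Set.self_mem_Ici hx hx

-- L1
lemma l1 (v : ℝ) (hv : 1 < v) : Real.log v < Real.sqrt v - (Real.sqrt v)⁻¹ := by
  set y := Real.sqrt v with hy
  have hv0 : (0:ℝ) < v := by linarith
  have hy1 : 1 < y := by
    rw [hy, show (1:ℝ) = Real.sqrt 1 by simp]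
    exact Real.sqrt_lt_sqrt (by norm_num) hv
  have hly : Real.log y = Real.log v / 2 := Real.log_sqrt hv0.le
  have h1 : Real.log y < Real.sinh (Real.log y) := Real.self_lt_sinh_iff.2 (Real.log_pos hy1)
  have h2 : Real.sinh (Real.log y) = (y - y⁻¹) / 2 := Real.sinh_log (by linarith)
  rw [h2, hly] at h1
  linarith

-- L2
lemma l2 (v : ℝ) (hv : 1 ≤ v) : 18 * v * Real.log v ≤ 12 * v ^ 2 - 9 * v - 3 * v⁻¹ := by
  rcases eq_or_lt_of_le hv with h | h
  · simp [← h]; norm_num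
  set y := Real.sqrt v with hy
  have hv0 : (0:ℝ) < v := by linarith
  have hy2 : y ^ 2 = v := Real.sq_sqrt hv0.le
  have hy1 : 1 < y := by
    rw [hy, show (1:ℝ) = Real.sqrt 1 by simp]
    exact Real.sqrt_lt_sqrt (by norm_num) h
  have hy0 : (0:ℝ) < y := by linarith
  have hl := l1 v h
  rw [← hy] at hl
  have h18 : 18 * v * Real.log v < 18 * (y ^ 3 - y) := by
    have e : v * (y - y⁻¹) = y ^ 3 - y := by
      field_simp
      nlinarith [hy2]
    nlinarith [hl, hv0]
  have hfin : 18 * (y ^ 3 - y) ≤ 12 * v ^ 2 - 9 * v - 3 * v⁻¹ := by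
    rw [← hy2]
    have key : 12 * (y^2) ^ 2 - 9 * y^2 - 3 * ((y^2)⁻¹) - 18 * (y ^ 3 - y)
        = (y - 1) ^ 3 * (12 * y ^ 3 + 18 * y ^ 2 + 9 * y + 3) / y ^ 2 := by
      field_simp
      ring
    nlinarith [key, mul_nonneg (pow_nonneg (by linarith : (0:ℝ) ≤ y - 1) 3)
      (by positivity : (0:ℝ) ≤ 12 * y ^ 3 + 18 * y ^ 2 + 9 * y + 3),
      div_nonneg (mul_nonneg (pow_nonneg (by linarith : (0:ℝ) ≤ y - 1) 3)
        (by positivity : (0:ℝ) ≤ 12 * y ^ 3 + 18 * y ^ 2 + 9 * y + 3))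
        (by positivity : (0:ℝ) ≤ y ^ 2)]
  linarith

-- L3 : 0 ≤ 4v³ - 4 - 3(3v²+1) log v on [1,∞)
lemma l3 (v : ℝ) (hv : 1 ≤ v) : 0 ≤ 4 * v ^ 3 - 4 - 3 * (3 * v ^ 2 + 1) * Real.log v := by
  have := mono_help (f := fun x => 4 * x ^ 3 - 4 - 3 * (3 * x ^ 2 + 1) * Real.log x)
    (f' := fun x => 12 * x ^ 2 - (18 * x * Real.log x + 9 * x + 3 * x⁻¹)) ?_ ?_ ?_ v hv
  · exact this
  · intro x hx
    have hx0 : (0:ℝ) < x := by linarith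
    have hlog := Real.hasDerivAt_log hx0.ne'
    have hc : HasDerivAt (fun x : ℝ => 3 * (3 * x ^ 2 + 1)) (3 * (3 * (2 * x ^ 1))) x :=
      (((hasDerivAt_pow 2 x).const_mul 3).add_const 1).const_mul 3
    have hmul := hc.mul hlog
    have hmain := (((hasDerivAt_pow 3 x).const_mul 4).sub_const 4).sub hmul
    refine hmain.congr_deriv ?_
    field_simp
    ring
  · intro x hx
    have hx0 : (0:ℝ) < x := by linarith
    have := l2 x hx
    linarith
  · norm_num

-- L4 : 3(v³+v) log v ≤ v⁴+v³-v-1 on [1,∞)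
lemma l4 (v : ℝ) (hv : 1 ≤ v) :
    3 * (v ^ 3 + v) * Real.log v ≤ v ^ 4 + v ^ 3 - v - 1 := by
  have := mono_help (f := fun x => x ^ 4 + x ^ 3 - x - 1 - 3 * (x ^ 3 + x) * Real.log x)
    (f' := fun x => 4 * x ^ 3 - 4 - 3 * (3 * x ^ 2 + 1) * Real.log x) ?_ ?_ ?_ v hv
  · linarith
  · intro x hx
    have hx0 : (0:ℝ) < x := by linarith
    have hlog := Real.hasDerivAt_log hx0.ne'
    have hc : HasDerivAt (fun x : ℝ => 3 * (x ^ 3 + x)) (3 * (3 * x ^ 2 + 1)) x := by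
      have := ((hasDerivAt_pow 3 x).add (hasDerivAt_id x)).const_mul 3
      refine this.congr_deriv ?_; ring
    have hmul := hc.mul hlog
    have hpoly : HasDerivAt (fun x : ℝ => x ^ 4 + x ^ 3 - x - 1)
        (4 * x ^ 3 + 3 * x ^ 2 - 1) x := by
      have := (((hasDerivAt_pow 4 x).add (hasDerivAt_pow 3 x)).sub (hasDerivAt_id x)).sub_const 1
      refine this.congr_deriv ?_; ring
    have hmain := hpoly.sub hmul
    refine hmain.congr_deriv ?_
    field_simp
    ring
  · intro x hx
    exact l3 x hx
  · norm_num

noncomputable def arccosh (t : ℝ) : ℝ := Real.log (t + Real.sqrt (t ^ 2 - 1))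

theorem stmt_8 (t : ℝ) (ht : 1 < t) :
    (-(3 / 2) * t ^ ((7 : ℝ) / 3) + 2 * t ^ 3 - t / 2 + 3 / t) * Real.sqrt (t ^ 2 - 1)
      - 3 * arccosh t > 0 := by
  have ht0 : (0:ℝ) < t := by linarith
  set s := Real.sqrt (t ^ 2 - 1) with hsdef
  have hs2 : s ^ 2 = t ^ 2 - 1 := Real.sq_sqrt (by nlinarith)
  have hs0 : 0 < s := Real.sqrt_pos.2 (by nlinarith)
  set v := t + s with hvdef
  have hv1 : 1 < v := by simp only [hvdef]; linarith
  have hA : arccosh t = Real.log v := rfl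
  -- from l4
  have h4 := l4 v hv1.le
  have e1 : v ^ 2 + 1 = 2 * t * v := by
    simp only [hvdef]; linear_combination hs2
  have e2 : v ^ 2 - 1 = 2 * s * v := by
    simp only [hvdef]; linear_combination -hs2
  have hv0 : (0:ℝ) < v := by linarith
  -- 3 t log v ≤ s (2t+1)
  have hlog : 3 * t * Real.log v ≤ s * (2 * t + 1) := by
    have ea : 3 * (v ^ 3 + v) * Real.log v = (3 * t * Real.log v) * (2 * v ^ 2) := by
      have : v ^ 3 + v = 2 * t * v ^ 2 := by linear_combination v * e1
      rw [this]; ring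
    have eb : v ^ 4 + v ^ 3 - v - 1 = (s * (2 * t + 1)) * (2 * v ^ 2) := by
      linear_combination (v ^ 2 + v + 1) * e2 + 2 * s * v * e1
    rw [ea, eb] at h4
    exact le_of_mul_le_mul_right h4 (by positivity)
  -- L6 : 2t+1 < P(t)*t  via x = t^(1/3)
  have hP : (2 * t + 1) < (-(3 / 2) * t ^ ((7 : ℝ) / 3) + 2 * t ^ 3 - t / 2 + 3 / t) * t := by
    set x := t ^ ((1:ℝ)/3) with hxdef
    have hx1 : 1 < x := by
      rw [hxdef]
      exact Real.one_lt_rpow_iff_of_pos ht0 |>.2 (Or.inl ⟨ht, by norm_num⟩)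
    have hx0 : (0:ℝ) < x := by linarith
    have hx3 : x ^ 3 = t := by
      rw [hxdef, ← Real.rpow_natCast (t ^ ((1:ℝ)/3)) 3, ← Real.rpow_mul ht0.le]
      norm_num
    have hx7 : x ^ 7 = t ^ ((7:ℝ)/3) := by
      rw [hxdef, ← Real.rpow_natCast (t ^ ((1:ℝ)/3)) 7, ← Real.rpow_mul ht0.le]
      norm_num
    rw [← hx7, ← hx3]
    have key : 4*x^12 - 3*x^10 - x^6 - 4*x^3 + 4
        = (x-1)^2 * (4*x^10+8*x^9+9*x^8+10*x^7+11*x^6+12*x^5+12*x^4+12*x^3+12*x^2+8*x+4) := by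
      ring
    have hpos : 0 < (x-1)^2 * (4*x^10+8*x^9+9*x^8+10*x^7+11*x^6+12*x^5+12*x^4+12*x^3+12*x^2+8*x+4) := by
      apply mul_pos
      · have : x - 1 ≠ 0 := by intro h; nlinarith
        positivity
      · positivity
    have hexp : (-(3 / 2) * x ^ 7 + 2 * (x ^ 3) ^ 3 - x ^ 3 / 2 + 3 / x ^ 3) * x ^ 3
        = -(3/2)*x^10 + 2*x^12 - x^6/2 + 3 := by
      field_simp
    rw [hexp]
    linarith [key, hpos]
  -- conclude
  rw [hA]
  have h1 : 3 * t * Real.log v < s * ((-(3 / 2) * t ^ ((7 : ℝ) / 3) + 2 * t ^ 3 - t / 2 + 3 / t) * t) := by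
    calc 3 * t * Real.log v ≤ s * (2 * t + 1) := hlog
    _ < s * ((-(3 / 2) * t ^ ((7 : ℝ) / 3) + 2 * t ^ 3 - t / 2 + 3 / t) * t) := by
        exact (mul_lt_mul_iff_right₀ hs0).2 hP
  have h2 : 0 < t * ((-(3 / 2) * t ^ ((7 : ℝ) / 3) + 2 * t ^ 3 - t / 2 + 3 / t) * s - 3 * Real.log v) := by
    nlinarith [h1]
  have h3 := div_pos h2 ht0
  rwa [mul_div_cancel_left₀ _ ht0.ne'] at h3
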